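/- For any multi-tilde-bar expression E'₁,ₙ and all 1 ≤ j < l ≤ n (with appropriate splitting at j), the concatenation L(E'₁,ⱼ) ⊙ε L(E'ⱼ₊₁,ₗ) is contained in L(E'₁,ₗ), where ⊙ε denotes concatenation followed by removal of ε when (1,l) is a bar pair, and plain concatenation otherwise. -/
import Mathlib


attribute [local instance] Classical.propDecidable

namespace Mtb

variable {A : Type*}

/-- `First L`: letters that can begin a word of `L`. -/
def First (L : Set (List A)) : Set A := {x | ∃ v, x :: v ∈ L}

/-- `Last L`: letters that can end a word of `L`. -/
def Last (L : Set (List A)) : Set A := {x | ∃ u, u ++ [x] ∈ L}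

/-- `Follow x L`: letters that can immediately follow `x` in a word of `L`. -/
def Follow (x : A) (L : Set (List A)) : Set A := {y | ∃ u v, u ++ x :: y :: v ∈ L}

/-- Letters occurring in some word of `L`. -/
def lettersOf (L : Set (List A)) : Set A := {a | ∃ w ∈ L, a ∈ w}

/-- Concatenation of languages. -/
def cat (L M : Set (List A)) : Set (List A) := {w | ∃ u ∈ L, ∃ v ∈ M, w = u ++ v}

/-- `nullL L = {ε}` if `ε ∈ L`, `∅` otherwise. -/
def nullL (L : Set (List A)) : Set (List A) := {w | w = [] ∧ [] ∈ L}

/-- Apply the tilde (add ε) or bar (remove ε) operator attached to the pair `p`, if any. -/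
def adjust (B T : Set (ℕ × ℕ)) (p : ℕ × ℕ) (L : Set (List A)) : Set (List A) :=
  if p ∈ T then L ∪ {[]} else if p ∈ B then L \ {[]} else L

/-- The language of the multi-tilde-bar expression `E'_{i,j}` built from factor languages
`E`, bar set `B` and tilde set `T`. -/
noncomputable def mtb (E : ℕ → Set (List A)) (B T : Set (ℕ × ℕ)) (i j : ℕ) : Set (List A) :=
  if i = j then adjust B T (i, i) (E i)
  else adjust B T (i, j) (⋃ k ∈ Set.Ico i j, cat (mtb E B T i k) (mtb E B T (k + 1) j))
termination_by j - i
decreasing_by all_goals (simp_all [Set.mem_Ico]; omega)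

/-- The bars-and-tildes sets are well-formed for `n` factors: disjoint, and within range. -/
def WellFormed (B T : Set (ℕ × ℕ)) (n : ℕ) : Prop :=
  Disjoint B T ∧ ∀ p ∈ B ∪ T, 1 ≤ p.1 ∧ p.1 ≤ p.2 ∧ p.2 ≤ n

/-- The `⊙ε` operator at level `p`: concatenation, with `ε` removed when `p` is a bar pair. -/
def odot (B : Set (ℕ × ℕ)) (p : ℕ × ℕ) (L M : Set (List A)) : Set (List A) :=
  if p ∈ B then cat L M \ {[]} else cat L M

end Mtb

open Mtb in
/-- For all `1 ≤ j < l ≤ n`, the concatenation `L(E'_{1,j}) ⊙ε L(E'_{j+1,l})` is contained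
in `L(E'_{1,l})`, where `⊙ε` removes `ε` when `(1,l)` is a bar pair. -/
theorem mtb_odot_subset {A : Type*} (n : ℕ) (E : ℕ → Set (List A))
    (B T : Set (ℕ × ℕ)) (hwf : WellFormed B T n)
    (j l : ℕ) (hj : 1 ≤ j) (hjl : j < l) (hl : l ≤ n) :
    odot B (1, l) (mtb E B T 1 j) (mtb E B T (j + 1) l) ⊆ mtb E B T 1 l := by
  have h1l : (1 : ℕ) ≠ l := by omega
  have hsub : cat (mtb E B T 1 j) (mtb E B T (j + 1) l) ⊆
      ⋃ k ∈ Set.Ico 1 l, cat (mtb E B T 1 k) (mtb E B T (k + 1) l) := by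
    intro w hw
    exact Set.mem_biUnion (Set.mem_Ico.mpr ⟨hj, hjl⟩) hw
  conv_rhs => rw [mtb, if_neg h1l]
  unfold odot adjust
  by_cases hB : (1, l) ∈ B
  · have hT : (1, l) ∉ T := fun hT => hwf.1.ne_of_mem hB hT rfl
    simp only [if_pos hB, if_neg hT]
    exact Set.diff_subset_diff_left hsub
  · simp only [if_neg hB]
    by_cases hT : (1, l) ∈ T
    · simp only [if_pos hT]
      exact hsub.trans Set.subset_union_left
    · simp only [if_neg hT]
      exact hsub
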